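/- Suppose the noise transition matrix T is row-diagonally dominant, i.e., for every class i and every j ≠ i one has T i j < T i i. If a measurable classifier f : X → Fin c disagrees with the target concept on a set of positive measure, i.e., μ {x : f x ≠ f* x} > 0, then its expected 0-1 loss on the noisy distribution is strictly larger than that of f*: ν {(x, y) : f* x ≠ y} < ν {(x, y) : f x ≠ y}, where ν is the noisy joint distribution. -/

import Mathlib

open MeasureTheory
open scoped ENNReal

/-- If the noise transition matrix `T` is row-diagonally dominant and
the classifier `f` disagrees with the target concept `fstar` on a set of positive
`μ`-measure, then the expected 0-1 loss of `f` on the noisy joint distribution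
`ν = μ ⊗ κ` is strictly larger than that of `fstar`. -/
theorem target_concept_strictly_minimizes_expected_01_loss
    {X : Type*} [MeasurableSpace X] (μ : Measure X) [IsProbabilityMeasure μ]
    (c : ℕ) (hc : 1 ≤ c)
    (fstar : X → Fin c) (hfstar : Measurable fstar)
    (T : Fin c → Fin c → ℝ)
    (hT0 : ∀ i j, 0 ≤ T i j) (hT1 : ∀ i, ∑ j, T i j = 1)
    (hdom : ∀ i j, j ≠ i → T i j < T i i)
    (ν : Measure (X × Fin c))
    (hν : ν = μ.bind (fun x => ∑ j, ENNReal.ofReal (T (fstar x) j) • Measure.dirac (x, j)))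
    (f : X → Fin c) (hf : Measurable f)
    (hdisagree : 0 < μ {x : X | f x ≠ fstar x}) :
    ν {p : X × Fin c | fstar p.1 ≠ p.2} < ν {p : X × Fin c | f p.1 ≠ p.2} := by
  have : Fact (0 < c) := ⟨hc⟩
  -- measurability of the kernel
  have hm : Measurable (fun x : X =>
      ∑ j, ENNReal.ofReal (T (fstar x) j) • Measure.dirac (x, j)) := by
    apply Measure.measurable_of_measurable_coe
    intro s hs
    simp only [Measure.finset_sum_apply, Measure.smul_apply, smul_eq_mul]
    refine Finset.measurable_sum _ fun j _ => Measurable.mul ?_ ?_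
    · exact (measurable_from_top
        (f := fun i : Fin c => ENNReal.ofReal (T i j))).comp hfstar
    · simp only [Measure.dirac_apply' _ hs]
      exact (measurable_one.indicator hs).comp (measurable_id.prodMk measurable_const)
  -- key formula for the expected loss of any measurable classifier g
  have key : ∀ g : X → Fin c, Measurable g →
      ν {p : X × Fin c | g p.1 ≠ p.2}
        = ∫⁻ x, (1 - ENNReal.ofReal (T (fstar x) (g x))) ∂μ := by
    intro g hg
    have hSmeas : MeasurableSet {p : X × Fin c | g p.1 ≠ p.2} := by
      have : {p : X × Fin c | g p.1 ≠ p.2}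
          = (fun p : X × Fin c => (g p.1, p.2)) ⁻¹'
            {q : Fin c × Fin c | q.1 ≠ q.2} := rfl
      rw [this]
      exact ((hg.comp measurable_fst).prodMk measurable_snd)
        ({q : Fin c × Fin c | q.1 ≠ q.2}.to_countable.measurableSet)
    rw [hν, Measure.bind_apply hSmeas hm.aemeasurable]
    apply lintegral_congr
    intro x
    simp only [Measure.finset_sum_apply, Measure.smul_apply, smul_eq_mul]
    have hval : ∀ j : Fin c,
        (Measure.dirac (x, j)) {p : X × Fin c | g p.1 ≠ p.2}
          = if j = g x then 0 else 1 := by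
      intro j
      rw [Measure.dirac_apply' _ hSmeas]
      by_cases h : j = g x
      · simp [Set.indicator_apply, h]
      · simp [Set.indicator_apply, h, Ne.symm h]
    simp only [hval, mul_ite, mul_zero, mul_one]
    have htot : ∑ j, ENNReal.ofReal (T (fstar x) j) = 1 := by
      rw [← ENNReal.ofReal_sum_of_nonneg (fun j _ => hT0 _ j), hT1, ENNReal.ofReal_one]
    refine ENNReal.eq_sub_of_add_eq ENNReal.ofReal_ne_top ?_
    calc (∑ j, if j = g x then 0 else ENNReal.ofReal (T (fstar x) j))
          + ENNReal.ofReal (T (fstar x) (g x))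
        = ∑ j, ((if j = g x then 0 else ENNReal.ofReal (T (fstar x) j))
            + (if j = g x then ENNReal.ofReal (T (fstar x) j) else 0)) := by
          rw [Finset.sum_add_distrib, Finset.sum_ite_eq' Finset.univ (g x)
            (fun j => ENNReal.ofReal (T (fstar x) j))]
          simp
      _ = ∑ j, ENNReal.ofReal (T (fstar x) j) := by
          refine Finset.sum_congr rfl fun j _ => ?_
          by_cases h : j = g x <;> simp [h]
      _ = 1 := htot
  have hTle1 : ∀ i j, T i j ≤ 1 := by
    intro i j
    calc T i j ≤ ∑ k, T i k :=
          Finset.single_le_sum (fun k _ => hT0 i k) (Finset.mem_univ j)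
      _ = 1 := hT1 i
  -- decompose the loss of f as loss of fstar plus a gap
  set h : X → ℝ≥0∞ := fun x => ENNReal.ofReal (T (fstar x) (fstar x) - T (fstar x) (f x))
    with hh
  have hdecomp : ∀ x, (1 : ℝ≥0∞) - ENNReal.ofReal (T (fstar x) (f x))
      = (1 - ENNReal.ofReal (T (fstar x) (fstar x))) + h x := by
    intro x
    have hab : T (fstar x) (f x) ≤ T (fstar x) (fstar x) := by
      by_cases hx : f x = fstar x
      · rw [hx]
      · exact (hdom (fstar x) (f x) hx).le
    have h1 : ENNReal.ofReal (T (fstar x) (fstar x)) ≤ 1 := by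
      rw [← ENNReal.ofReal_one]
      exact ENNReal.ofReal_le_ofReal (hTle1 _ _)
    have h2 : ENNReal.ofReal (T (fstar x) (f x)) ≤ ENNReal.ofReal (T (fstar x) (fstar x)) :=
      ENNReal.ofReal_le_ofReal hab
    show _ = _ + ENNReal.ofReal (T (fstar x) (fstar x) - T (fstar x) (f x))
    rw [ENNReal.ofReal_sub _ (hT0 _ _)]
    exact (tsub_add_tsub_cancel h1 h2).symm
  have hmh : Measurable h := by
    have : h = (fun q : Fin c × Fin c => ENNReal.ofReal (T q.1 q.1 - T q.1 q.2)) ∘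
        (fun x => (fstar x, f x)) := rfl
    rw [this]
    exact (measurable_of_countable _).comp (hfstar.prodMk hf)
  have hmb : Measurable (fun x => (1 : ℝ≥0∞) - ENNReal.ofReal (T (fstar x) (fstar x))) :=
    measurable_const.sub (((measurable_from_top
      (f := fun i : Fin c => T i i)).comp hfstar).ennreal_ofReal)
  rw [key fstar hfstar, key f hf]
  have heq : ∫⁻ x, (1 - ENNReal.ofReal (T (fstar x) (f x))) ∂μ
      = (∫⁻ x, (1 - ENNReal.ofReal (T (fstar x) (fstar x))) ∂μ) + ∫⁻ x, h x ∂μ := by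
    rw [← lintegral_add_left hmb]
    exact lintegral_congr hdecomp
  rw [heq]
  have hfin : (∫⁻ x, (1 - ENNReal.ofReal (T (fstar x) (fstar x))) ∂μ) ≠ ⊤ := by
    apply ne_of_lt
    calc (∫⁻ x, (1 - ENNReal.ofReal (T (fstar x) (fstar x))) ∂μ)
        ≤ ∫⁻ _, (1 : ℝ≥0∞) ∂μ := lintegral_mono fun x => tsub_le_self
      _ = 1 := by simp
      _ < ⊤ := ENNReal.one_lt_top
  have hpos : 0 < ∫⁻ x, h x ∂μ := by
    rw [lintegral_pos_iff_support hmh]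
    refine lt_of_lt_of_le hdisagree (measure_mono ?_)
    intro x hx
    have : 0 < T (fstar x) (fstar x) - T (fstar x) (f x) :=
      sub_pos.mpr (hdom (fstar x) (f x) hx)
    simp only [Function.mem_support, hh, ne_eq, ENNReal.ofReal_eq_zero, not_le]
    exact this
  exact ENNReal.lt_add_right hfin hpos.ne'
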